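/- Let N ≥ 2 and let β₀, β₁, ..., β_N be complex numbers satisfying β_{s+1}² = β_s · β_{s+2} · √((s+2)/(s+1)) · √((N−s)/(N−s−1)) for all s = 0, 1, ..., N−2, and additionally satisfying: if β₁ = ... = β_{N−1} = 0 then β₀ = 0 or β_N = 0. Then there exist complex numbers U₁, U₂ such that β_n = (binom(N,n))^{1/2} · U₁^n · U₂^{N−n} for all n = 0, ..., N. -/
import Mathlib

open Real

/-- Resolution of the Yurke–Stoler constraints: the recurrence together with the
NOON condition forces the binomial (single-mode type) form of the coefficients. -/
theorem stmt_3 (N : ℕ) (hN : 2 ≤ N) (β : ℕ → ℂ)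
    (hrec : ∀ s, s + 2 ≤ N →
      β (s + 1) ^ 2 = β s * β (s + 2) *
        (Real.sqrt ((s + 2 : ℝ) / (s + 1)) : ℂ) *
        (Real.sqrt (((N : ℝ) - s) / ((N : ℝ) - s - 1)) : ℂ))
    (hnoon : (∀ j, 1 ≤ j → j ≤ N - 1 → β j = 0) → β 0 = 0 ∨ β N = 0) :
    ∃ U₁ U₂ : ℂ, ∀ n ≤ N,
      β n = (Real.sqrt (N.choose n) : ℂ) * U₁ ^ n * U₂ ^ (N - n) := by
  have hcne : ∀ n, n ≤ N → ((Real.sqrt (N.choose n) : ℝ) : ℂ) ≠ 0 := by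
    intro n hn
    have : (0:ℝ) < Real.sqrt (N.choose n) :=
      Real.sqrt_pos.mpr (by exact_mod_cast Nat.choose_pos hn)
    exact_mod_cast ne_of_gt this
  by_cases hz : ∀ j, 1 ≤ j → j ≤ N - 1 → β j = 0
  · rcases hnoon hz with h0 | hNz
    · obtain ⟨U₁, hU₁⟩ := Complex.isAlgClosed.exists_pow_nat_eq (β N) (show 0 < N by omega)
      refine ⟨U₁, 0, ?_⟩
      intro n hn
      rcases eq_or_lt_of_le hn with rfl | hlt
      · simp [hU₁, Nat.choose_self]
      · have hb : β n = 0 := by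
          rcases Nat.eq_zero_or_pos n with rfl | hp
          · exact h0
          · exact hz n hp (by omega)
        rw [hb]
        rw [zero_pow (show N - n ≠ 0 by omega)]
        ring
    · obtain ⟨U₂, hU₂⟩ := Complex.isAlgClosed.exists_pow_nat_eq (β 0) (show 0 < N by omega)
      refine ⟨0, U₂, ?_⟩
      intro n hn
      rcases Nat.eq_zero_or_pos n with rfl | hp
      · simp [hU₂, Nat.choose_zero_right]
      · have hb : β n = 0 := by
          rcases eq_or_lt_of_le hn with rfl | hlt
          · exact hNz
          · exact hz n hp (by omega)
        rw [hb, zero_pow (show n ≠ 0 by omega)]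
        ring
  · push_neg at hz
    obtain ⟨j, hj1, hjN, hjne⟩ := hz
    set c : ℕ → ℂ := fun n => ((Real.sqrt (N.choose n) : ℝ) : ℂ) with hcdef
    set γ : ℕ → ℂ := fun n => β n / c n with hγdef
    -- the reduced recurrence
    have hγ : ∀ s, s + 2 ≤ N → γ (s + 1) ^ 2 = γ s * γ (s + 2) := by
      intro s hs
      obtain ⟨m, hm⟩ : ∃ m, N = s + m + 2 := ⟨N - s - 2, by omega⟩
      have hNs : ((N : ℝ) - s) = (m : ℝ) + 2 := by rw [hm]; push_cast; ring
      have hNs1 : ((N : ℝ) - s - 1) = (m : ℝ) + 1 := by rw [hm]; push_cast; ring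
      -- natural number identities
      have h1 : (N.choose (s+1)) * (s+1) = N.choose s * (m+2) := by
        have := Nat.choose_succ_right_eq N s
        rw [this]; congr 1; omega
      have h2 : (N.choose (s+2)) * (s+2) = N.choose (s+1) * (m+1) := by
        have := Nat.choose_succ_right_eq N (s+1)
        rw [this]; congr 1; omega
      have h1' : ((N.choose (s+1) : ℝ)) * ((s:ℝ)+1) = (N.choose s : ℝ) * ((m:ℝ)+2) := by
        exact_mod_cast congrArg (Nat.cast : ℕ → ℝ) h1
      have h2' : ((N.choose (s+2) : ℝ)) * ((s:ℝ)+2) = (N.choose (s+1) : ℝ) * ((m:ℝ)+1) := by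
        exact_mod_cast congrArg (Nat.cast : ℕ → ℝ) h2
      have hs1 : ((s:ℝ)+1) ≠ 0 := by positivity
      have hm1 : ((m:ℝ)+1) ≠ 0 := by positivity
      -- key real identity
      have key : Real.sqrt (((s:ℝ) + 2) / ((s:ℝ)+1)) * Real.sqrt (((N : ℝ) - s) / ((N : ℝ) - s - 1)) *
          Real.sqrt (N.choose s) * Real.sqrt (N.choose (s+2)) = (N.choose (s+1) : ℝ) := by
        rw [hNs1, hNs]
        rw [← Real.sqrt_mul (by positivity), ← Real.sqrt_mul (by positivity),
          ← Real.sqrt_mul (by positivity)]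
        have hX : ((s:ℝ) + 2) / ((s:ℝ)+1) * (((m:ℝ)+2) / ((m:ℝ)+1)) * (N.choose s : ℝ) *
            (N.choose (s+2) : ℝ) = ((N.choose (s+1) : ℝ))^2 := by
          field_simp
          linear_combination ((m:ℝ)+2) * (N.choose s : ℝ) * h2' -
            ((m:ℝ)+1) * (N.choose (s+1) : ℝ) * h1'
        rw [hX, Real.sqrt_sq (by positivity)]
      have hkey : ((Real.sqrt (((s:ℝ) + 2) / ((s:ℝ)+1)) : ℝ) : ℂ) *
          ((Real.sqrt (((N : ℝ) - s) / ((N : ℝ) - s - 1)) : ℝ) : ℂ) * c s * c (s+2) =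
          ((N.choose (s+1) : ℝ) : ℂ) := by
        simp only [hcdef]
        exact_mod_cast congrArg (Complex.ofReal) key
      have hc1 : c (s+1) ^ 2 = ((N.choose (s+1) : ℝ) : ℂ) := by
        simp only [hcdef]
        rw [← Complex.ofReal_pow, Real.sq_sqrt (by positivity)]
      have e := hrec s hs
      have hcs := hcne s (by omega)
      have hcs1 := hcne (s+1) (by omega)
      have hcs2 := hcne (s+2) (by omega)
      simp only [hγdef]
      rw [div_pow, div_mul_div_comm]
      rw [e, hc1]
      rw [div_eq_div_iff (by rw [← hc1]; exact pow_ne_zero 2 hcs1) (mul_ne_zero hcs hcs2)]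
      rw [← hkey]
      ring
    have hγj : γ j ≠ 0 := div_ne_zero hjne (hcne j (by omega))
    have hdown : ∀ k, k ≤ j → γ (j - k) ≠ 0 := by
      intro k
      induction k with
      | zero => intro _; simpa using hγj
      | succ k ih =>
        intro hk
        have h1 := ih (by omega)
        have heq := hγ (j - (k+1)) (by omega)
        rw [show j - (k+1) + 1 = j - k by omega] at heq
        intro h0
        rw [h0, zero_mul] at heq
        exact h1 (pow_eq_zero_iff (two_ne_zero) |>.mp heq)
    have hup : ∀ k, j + k ≤ N → γ (j + k) ≠ 0 := by
      intro k
      induction k with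
      | zero => intro _; simpa using hγj
      | succ k ih =>
        intro hk
        have h1 := ih (by omega)
        have heq := hγ (j + k - 1) (by omega)
        rw [show j + k - 1 + 1 = j + k by omega, show j + k - 1 + 2 = j + (k+1) by omega] at heq
        exact right_ne_zero_of_mul (heq ▸ pow_ne_zero 2 h1)
    have hall : ∀ n, n ≤ N → γ n ≠ 0 := by
      intro n hn
      rcases le_total n j with h | h
      · have := hdown (j - n) (by omega)
        rwa [show j - (j - n) = n by omega] at this
      · have := hup (n - j) (by omega)
        rwa [show j + (n - j) = n by omega] at this
    have h0 : γ 0 ≠ 0 := hall 0 (by omega)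
    have h1 : γ 1 ≠ 0 := hall 1 (by omega)
    set r : ℂ := γ 1 / γ 0 with hrdef
    have hr : r ≠ 0 := div_ne_zero h1 h0
    have hgeo : ∀ n, n ≤ N → γ n = γ 0 * r ^ n := by
      intro n
      induction n using Nat.strong_induction_on with
      | _ n ih =>
        match n with
        | 0 => intro _; simp
        | 1 => intro _; rw [hrdef]; field_simp
        | (k+2) =>
          intro hn
          have e := hγ k hn
          rw [ih k (by omega) (by omega), ih (k+1) (by omega) (by omega)] at e
          have hne : γ 0 * r ^ k ≠ 0 := mul_ne_zero h0 (pow_ne_zero _ hr)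
          have h3 : γ 0 * r ^ k * (γ 0 * r ^ (k+2)) = γ 0 * r ^ k * γ (k+2) := by
            rw [← e]; ring
          exact (mul_left_cancel₀ hne h3).symm
    obtain ⟨U₂, hU₂⟩ := Complex.isAlgClosed.exists_pow_nat_eq (γ 0) (show 0 < N by omega)
    refine ⟨r * U₂, U₂, ?_⟩
    intro n hn
    have hb : β n = c n * γ n := by
      rw [hγdef]
      rw [mul_div_cancel₀ _ (hcne n hn)]
    rw [hb, hgeo n hn, ← hU₂]
    have hsplit : U₂ ^ N = U₂ ^ n * U₂ ^ (N - n) := by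
      rw [← pow_add]
      congr 1
      omega
    rw [hsplit, hcdef]
    ring
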